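/- Let L ∈ ℝ^{n×n} satisfy L·1 = 0. If −L is marginally stable with dim ker L = 1 (equivalently, 0 is a simple eigenvalue of L and every other eigenvalue has strictly positive real part), then for every d > max over nonzero eigenvalues λ of |λ|²/(2 Re λ), the matrix B = dI − L has spectral radius ρ(B) = d, which is a simple strictly dominant eigenvalue with positive right eigenvector 1. -/

import Mathlib

open Matrix Filter Polynomial Topology Pointwise

noncomputable section

/-- Complexification of a real matrix. -/
def cmat {n : ℕ} (A : Matrix (Fin n) (Fin n) ℝ) : Matrix (Fin n) (Fin n) ℂ :=
  A.map (algebraMap ℝ ℂ)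

/-- `A` is eventually positive: all sufficiently large powers are entrywise positive. -/
def EvPos {n : ℕ} (A : Matrix (Fin n) (Fin n) ℝ) : Prop :=
  ∃ t0 : ℕ, ∀ t ≥ t0, ∀ i j, 0 < (A ^ t) i j

/-- `A` is eventually exponentially positive: `e^{At}` is entrywise positive for all large `t`. -/
def EvExpPos {n : ℕ} (A : Matrix (Fin n) (Fin n) ℝ) : Prop :=
  ∃ t0 : ℝ, 0 ≤ t0 ∧ ∀ t ≥ t0, ∀ i j, 0 < (NormedSpace.exp (t • A)) i j

/-- Spectral radius of a real matrix, via its complex spectrum. -/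
def specRad {n : ℕ} (A : Matrix (Fin n) (Fin n) ℝ) : ℝ :=
  sSup ((‖·‖) '' spectrum ℂ (cmat A))

/-- `μ` is a simple eigenvalue of `A`: it has multiplicity one as a root of the
characteristic polynomial. -/
def SimpleEig {n : ℕ} (A : Matrix (Fin n) (Fin n) ℝ) (μ : ℂ) : Prop :=
  (Matrix.charpoly (cmat A)).roots.count μ = 1

/-- Marginal (continuous-time) stability: every eigenvalue has nonpositive real part, and
eigenvalues on the imaginary axis are simple roots of the minimal polynomial. -/
def MarginallyStable {n : ℕ} (A : Matrix (Fin n) (Fin n) ℝ) : Prop :=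
  ∀ μ ∈ spectrum ℂ (cmat A), μ.re ≤ 0 ∧
    (μ.re = 0 → Polynomial.rootMultiplicity μ (minpoly ℂ (cmat A)) = 1)

/-- Marginal Schur stability: every eigenvalue has modulus at most one, and eigenvalues of
modulus one are simple roots of the minimal polynomial. -/
def MarginallySchurStable {n : ℕ} (A : Matrix (Fin n) (Fin n) ℝ) : Prop :=
  ∀ μ ∈ spectrum ℂ (cmat A), ‖μ‖ ≤ 1 ∧
    (‖μ‖ = 1 → Polynomial.rootMultiplicity μ (minpoly ℂ (cmat A)) = 1)

/-- Irreducibility: no nontrivial proper index subset `S` with `A i j = 0` for all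
`i ∈ S`, `j ∉ S` (equivalently, no permutation puts `A` in block triangular form). -/
def MatIrreducible {n : ℕ} (A : Matrix (Fin n) (Fin n) ℝ) : Prop :=
  ¬ ∃ S : Finset (Fin n), S.Nonempty ∧ S ≠ Finset.univ ∧ ∀ i ∈ S, ∀ j ∉ S, A i j = 0

/-- The all-ones vector. -/
def ones (n : ℕ) : Fin n → ℝ := fun _ => 1

/-- A complex number is in the spectrum of a complex matrix iff it is a root of the
characteristic polynomial. -/
lemma spec_iff_root {m : ℕ} (M : Matrix (Fin m) (Fin m) ℂ) (μ : ℂ) :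
    μ ∈ spectrum ℂ M ↔ M.charpoly.IsRoot μ := by
  have hev : M.charpoly.eval μ = (algebraMap ℂ _ μ - M).det := by
    rw [Matrix.charpoly, _root_.eval_det, Matrix.matPolyEquiv_charmatrix, eval_sub, eval_X,
      eval_C, Matrix.scalar_apply, Matrix.algebraMap_eq_diagonal]
    rfl
  rw [spectrum.mem_iff, Matrix.isUnit_iff_isUnit_det, isUnit_iff_ne_zero, not_ne_iff,
    IsRoot, hev]

/-- Characteristic polynomial of `d • 1 - M` in terms of that of `M`. -/
lemma charpoly_shift {m : ℕ} (M : Matrix (Fin m) (Fin m) ℂ) (d : ℂ) :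
    (d • (1 : Matrix (Fin m) (Fin m) ℂ) - M).charpoly
      = (-1) ^ m * (M.charpoly.comp (C d - X)) := by
  have key : M.charpoly.comp (C d - X)
      = (-(charmatrix (d • (1 : Matrix (Fin m) (Fin m) ℂ) - M))).det := by
    have h1 : M.charpoly.comp (C d - X)
        = (eval₂RingHom C (C d - X) : ℂ[X] →+* ℂ[X]) (charmatrix M).det := rfl
    rw [h1, RingHom.map_det]
    congr 1
    ext i j
    by_cases h : i = j
    · subst h
      simp [charmatrix_apply_eq, Matrix.smul_apply, Matrix.one_apply, C_sub]
      ring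
    · simp [charmatrix_apply_ne _ _ _ h, Matrix.smul_apply, Matrix.one_apply_ne h]
  rw [Matrix.charpoly, key, Matrix.det_neg, Fintype.card_fin, ← mul_assoc, ← pow_add,
    Even.neg_one_pow ⟨m, rfl⟩, one_mul]

/-- Root multiplicity transfers through composition with `C d - X`. -/
lemma rm_comp {d : ℂ} {p : ℂ[X]} (hp : p ≠ 0) (h : rootMultiplicity 0 p = 1) :
    rootMultiplicity d (p.comp (C d - X)) = 1 := by
  have hinv : ∀ q : ℂ[X], (q.comp (C d - X)).comp (C d - X) = q := by
    intro q
    rw [comp_assoc, sub_comp, C_comp, X_comp, sub_sub_cancel, comp_X]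
  have hcomp_ne : p.comp (C d - X) ≠ 0 := by
    intro h0
    apply hp
    rw [← hinv p, h0, zero_comp]
  apply le_antisymm
  · rw [rootMultiplicity_le_iff hcomp_ne]
    rintro ⟨r, hr⟩
    have hX2 : ¬ (X - C (0:ℂ)) ^ (1 + 1) ∣ p := by
      rw [← rootMultiplicity_le_iff hp, h]
    apply hX2
    have := congrArg (fun q : ℂ[X] => q.comp (C d - X)) hr
    simp only [mul_comp, pow_comp, sub_comp, X_comp, C_comp, hinv p] at this
    refine ⟨r.comp (C d - X), ?_⟩
    rw [this]
    simp only [C_0, sub_zero]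
    ring
  · rw [le_rootMultiplicity_iff hcomp_ne, pow_one]
    have hXp : (X - C (0:ℂ)) ^ 1 ∣ p := by
      rw [← h]; exact pow_rootMultiplicity_dvd p 0
    obtain ⟨r, hr⟩ := hXp
    refine ⟨-(r.comp (C d - X)), ?_⟩
    rw [hr]
    simp only [pow_one, C_0, sub_zero, mul_comp, X_comp]
    ring

/-- Complexification commutes with the shift `d • 1 - ·`. -/
lemma cmat_shift {n : ℕ} (L : Matrix (Fin n) (Fin n) ℝ) (d : ℝ) :
    cmat (d • (1 : Matrix (Fin n) (Fin n) ℝ) - L)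
      = (d : ℂ) • (1 : Matrix (Fin n) (Fin n) ℂ) - cmat L := by
  ext i j
  simp only [cmat, Matrix.map_apply, Matrix.sub_apply, Matrix.smul_apply, Matrix.one_apply,
    smul_eq_mul, Complex.coe_algebraMap]
  push_cast [apply_ite (Complex.ofReal)]
  split_ifs <;> simp

/-- If `0` is a simple eigenvalue of `L` and all other eigenvalues have positive real part,
then for every `d > max_{λ ≠ 0} |λ|²/(2 Re λ)` the matrix `B = dI - L` has spectral radius
`d`, which is a simple strictly dominant eigenvalue with positive right eigenvector `1`. -/
theorem stmt6 {n : ℕ} (L : Matrix (Fin n) (Fin n) ℝ) (hL : L *ᵥ ones n = 0)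
    (h0 : SimpleEig L 0)
    (hpos : ∀ μ ∈ spectrum ℂ (cmat L), μ ≠ 0 → 0 < μ.re)
    (d : ℝ) (hd0 : 0 < d)
    (hd : ∀ μ ∈ spectrum ℂ (cmat L), μ ≠ 0 → ‖μ‖ ^ 2 / (2 * μ.re) < d) :
    specRad (d • (1 : Matrix (Fin n) (Fin n) ℝ) - L) = d ∧
      SimpleEig (d • (1 : Matrix (Fin n) (Fin n) ℝ) - L) (d : ℂ) ∧
      (∀ μ ∈ spectrum ℂ (cmat (d • (1 : Matrix (Fin n) (Fin n) ℝ) - L)),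
        μ ≠ (d : ℂ) → ‖μ‖ < d) ∧
      (d • (1 : Matrix (Fin n) (Fin n) ℝ) - L) *ᵥ ones n = d • ones n := by
  have h0' : (Matrix.charpoly (cmat L)).roots.count 0 = 1 := h0
  have hcB := cmat_shift L d
  -- 0 is in the spectrum of `cmat L`
  have h0spec : (0 : ℂ) ∈ spectrum ℂ (cmat L) := by
    rw [spec_iff_root]
    have hm : (0 : ℂ) ∈ (cmat L).charpoly.roots :=
      Multiset.count_pos.mp (by rw [h0']; norm_num)
    exact (mem_roots'.mp hm).2
  -- spectrum of the shifted matrix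
  have hspecB : spectrum ℂ ((d : ℂ) • (1 : Matrix (Fin n) (Fin n) ℂ) - cmat L)
      = {(d : ℂ)} - spectrum ℂ (cmat L) := by
    have halg : ((d : ℂ) • (1 : Matrix (Fin n) (Fin n) ℂ))
        = algebraMap ℂ (Matrix (Fin n) (Fin n) ℂ) (d : ℂ) :=
      (Algebra.algebraMap_eq_smul_one _).symm
    rw [halg, ← spectrum.singleton_sub_eq]
  have hdB : (d : ℂ) ∈ spectrum ℂ ((d : ℂ) • (1 : Matrix (Fin n) (Fin n) ℂ) - cmat L) := by
    rw [hspecB]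
    simpa using Set.sub_mem_sub (Set.mem_singleton (d : ℂ)) h0spec
  -- strict dominance
  have hstrict : ∀ μ ∈ spectrum ℂ ((d : ℂ) • (1 : Matrix (Fin n) (Fin n) ℂ) - cmat L),
      μ ≠ (d : ℂ) → ‖μ‖ < d := by
    intro μ hμ hne
    rw [hspecB, Set.mem_sub] at hμ
    obtain ⟨x, hx, y, hy, rfl⟩ := hμ
    rw [Set.mem_singleton_iff] at hx
    subst hx
    have hy0 : y ≠ 0 := by
      rintro rfl
      simp at hne
    have hre := hpos y hy hy0
    have hb2 := hd y hy hy0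
    rw [div_lt_iff₀ (by linarith)] at hb2
    have h1 : ‖(d : ℂ) - y‖ ^ 2 < d ^ 2 := by
      rw [Complex.sq_norm, Complex.normSq_apply, Complex.sub_re, Complex.sub_im,
        Complex.ofReal_re, Complex.ofReal_im]
      rw [Complex.sq_norm, Complex.normSq_apply] at hb2
      nlinarith
    exact lt_of_pow_lt_pow_left₀ 2 (le_of_lt hd0) h1
  refine ⟨?_, ?_, ?_, ?_⟩
  · -- spectral radius
    rw [specRad, hcB]
    apply IsGreatest.csSup_eq
    constructor
    · exact ⟨(d : ℂ), hdB, by simp [abs_of_pos hd0]⟩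
    · rintro x ⟨μ, hμ, rfl⟩
      by_cases hμd : μ = (d : ℂ)
      · subst hμd
        simp [abs_of_pos hd0]
      · exact le_of_lt (hstrict μ hμ hμd)
  · -- simple eigenvalue
    show (Matrix.charpoly (cmat (d • (1 : Matrix (Fin n) (Fin n) ℝ) - L))).roots.count
      (d : ℂ) = 1
    rw [hcB, count_roots, charpoly_shift]
    have hp : (cmat L).charpoly ≠ 0 := (Matrix.charpoly_monic (cmat L)).ne_zero
    have hrm0 : rootMultiplicity 0 (cmat L).charpoly = 1 := by
      rw [← Polynomial.count_roots]; exact h0'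
    have hcomp := rm_comp (d := (d : ℂ)) hp hrm0
    have hne : ((-1 : ℂ[X]) ^ n * ((cmat L).charpoly.comp (C (d : ℂ) - X))) ≠ 0 := by
      rw [← charpoly_shift]
      exact (Matrix.charpoly_monic _).ne_zero
    rw [rootMultiplicity_mul hne, hcomp]
    have : rootMultiplicity (d : ℂ) ((-1 : ℂ[X]) ^ n) = 0 := by
      apply rootMultiplicity_eq_zero
      simp [IsRoot]
    rw [this]
  · -- strict dominance restated
    intro μ hμ hne
    rw [hcB] at hμ
    exact hstrict μ hμ hne
  · -- eigenvector
    rw [Matrix.sub_mulVec, Matrix.smul_mulVec, Matrix.one_mulVec, hL, sub_zero]
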